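/- Fix an integer I ≥ 2. A real polynomial q in the I² variables p_{i,j} vanishes at every matrix of the diagonal-effect toric model M1 if and only if q vanishes at every matrix of the diagonal-effect mixture model M2. (The models M1 and M2 have the same invariants.) -/

import Mathlib

open Polynomial in
lemma vanish_all_of_infinite {σ : Type*} (q : MvPolynomial σ ℝ) (g : σ → Polynomial ℝ)
    {s : Set ℝ} (hs : s.Infinite)
    (h : ∀ t ∈ s, MvPolynomial.eval (fun x => (g x).eval t) q = 0) (t0 : ℝ) :
    MvPolynomial.eval (fun x => (g x).eval t0) q = 0 := by
  set Q : Polynomial ℝ := MvPolynomial.eval₂ Polynomial.C g q with hQ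
  have key : ∀ t : ℝ, Q.eval t = MvPolynomial.eval (fun x => (g x).eval t) q := by
    intro t
    rw [hQ, show (Q.eval t : ℝ) = (evalRingHom t) (MvPolynomial.eval₂ Polynomial.C g q) from rfl,
      MvPolynomial.eval₂_comp_left (evalRingHom t) Polynomial.C g q]
    have hid : (evalRingHom t).comp Polynomial.C = RingHom.id ℝ := by
      ext x; simp
    rw [hid, MvPolynomial.eval₂_id]
    rfl
  have hQ0 : Q = 0 := by
    apply Polynomial.eq_zero_of_infinite_isRoot
    apply hs.mono
    intro t ht
    simp only [Set.mem_setOf_eq, Polynomial.IsRoot, key, h t ht]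
  rw [← key, hQ0, Polynomial.eval_zero]



/-- The diagonal-effect toric model `M1`: `I × I` nonnegative matrices summing to `1`
with `p i j = ζʳ i * ζᶜ j` off the diagonal and `p i i = ζʳ i * ζᶜ i * ζᵞ i`
for some nonnegative vectors `ζʳ, ζᶜ, ζᵞ`. -/
def inM1 {I : ℕ} (P : Matrix (Fin I) (Fin I) ℝ) : Prop :=
  (∀ i j, 0 ≤ P i j) ∧ (∑ i, ∑ j, P i j = 1) ∧
  ∃ zr zc zg : Fin I → ℝ,
    (∀ i, 0 ≤ zr i) ∧ (∀ i, 0 ≤ zc i) ∧ (∀ i, 0 ≤ zg i) ∧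
    (∀ i j, i ≠ j → P i j = zr i * zc j) ∧
    (∀ i, P i i = zr i * zc i * zg i)

/-- The diagonal-effect mixture model `M2`: matrices of the form
`α • (r cᵗ entrywise) + (1-α) • diag d` with `r, c, d` nonnegative vectors summing
to `1` and `α ∈ [0,1]`. -/
def inM2 {I : ℕ} (P : Matrix (Fin I) (Fin I) ℝ) : Prop :=
  ∃ (α : ℝ) (r c d : Fin I → ℝ),
    0 ≤ α ∧ α ≤ 1 ∧
    (∀ i, 0 ≤ r i) ∧ (∀ i, 0 ≤ c i) ∧ (∀ i, 0 ≤ d i) ∧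
    (∑ i, r i = 1) ∧ (∑ i, c i = 1) ∧ (∑ i, d i = 1) ∧
    (∀ i j, i ≠ j → P i j = α * r i * c j) ∧
    (∀ i, P i i = α * r i * c i + (1 - α) * d i)

open Polynomial in
lemma dirA {I : ℕ} (hI : 2 ≤ I) (q : MvPolynomial (Fin I × Fin I) ℝ)
    (h1 : ∀ P : Matrix (Fin I) (Fin I) ℝ, inM1 P →
        MvPolynomial.eval (fun x => P x.1 x.2) q = 0) :
    ∀ P : Matrix (Fin I) (Fin I) ℝ, inM2 P →
        MvPolynomial.eval (fun x => P x.1 x.2) q = 0 := by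
  intro P hP
  obtain ⟨α, r, c, d, hα0, hα1, hr, hc, hd, hrs, hcs, hds, hoff, hdiag⟩ := hP
  have hIpos : (0:ℝ) < I := by
    have : (0:ℕ) < I := by omega
    exact_mod_cast this
  set n : ℝ := (I : ℝ)⁻¹ with hn_def
  have hn : 0 < n := by positivity
  have hIn : (I : ℝ) * n = 1 := mul_inv_cancel₀ hIpos.ne'
  have hnsum : ∑ _i : Fin I, n = 1 := by
    rw [Finset.sum_const, Finset.card_univ, Fintype.card_fin, nsmul_eq_mul, hIn]
  -- the path functions
  set A : ℝ → ℝ := fun t => α + t * (1 - α) with hA_def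
  set R : ℝ → Fin I → ℝ := fun t i => r i + t * (n - r i) with hR_def
  set Cc : ℝ → Fin I → ℝ := fun t i => c i + t * (n - c i) with hC_def
  set D : ℝ → Fin I → ℝ := fun t i => d i + t * (n - d i) with hD_def
  set g : Fin I × Fin I → Polynomial ℝ := fun x =>
    (C α + X * C (1 - α)) * (C (r x.1) + X * C (n - r x.1)) * (C (c x.2) + X * C (n - c x.2))
      + if x.1 = x.2 then (C (1 - α) + X * C (α - 1)) * (C (d x.1) + X * C (n - d x.1)) else 0
    with hg_def
  have heval : ∀ (t : ℝ) (x : Fin I × Fin I), (g x).eval t =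
      A t * R t x.1 * Cc t x.2 + (if x.1 = x.2 then (1 - A t) * D t x.1 else 0) := by
    intro t x
    rw [hg_def]
    by_cases hx : x.1 = x.2
    · simp only [if_pos hx, eval_add, eval_mul, eval_C, eval_X, hA_def, hR_def, hC_def, hD_def]
      try ring
    · simp only [if_neg hx, eval_add, eval_mul, eval_C, eval_X, eval_zero,
        hA_def, hR_def, hC_def, hD_def]
      try ring
  have main : ∀ t ∈ Set.Ioo (0:ℝ) 1,
      MvPolynomial.eval (fun x => (g x).eval t) q = 0 := by
    rintro t ⟨ht0, ht1⟩
    have h1t : (0:ℝ) ≤ 1 - t := by linarith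
    have hA0 : 0 < A t := by
      have : A t = α * (1 - t) + t := by rw [hA_def]; ring
      nlinarith [mul_nonneg hα0 h1t]
    have hA1 : A t ≤ 1 := by
      have : 1 - A t = (1 - α) * (1 - t) := by rw [hA_def]; ring
      nlinarith [mul_nonneg (by linarith : (0:ℝ) ≤ 1 - α) h1t]
    have hRpos : ∀ i, 0 < R t i := by
      intro i
      have : R t i = r i * (1 - t) + t * n := by rw [hR_def]; ring
      nlinarith [mul_nonneg (hr i) h1t, mul_pos ht0 hn]
    have hCpos : ∀ i, 0 < Cc t i := by
      intro i
      have : Cc t i = c i * (1 - t) + t * n := by rw [hC_def]; ring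
      nlinarith [mul_nonneg (hc i) h1t, mul_pos ht0 hn]
    have hDpos : ∀ i, 0 < D t i := by
      intro i
      have : D t i = d i * (1 - t) + t * n := by rw [hD_def]; ring
      nlinarith [mul_nonneg (hd i) h1t, mul_pos ht0 hn]
    have h1A : 0 ≤ 1 - A t := by linarith
    have hsumR : ∑ i, R t i = 1 := by
      simp only [hR_def]
      rw [Finset.sum_add_distrib, ← Finset.mul_sum, Finset.sum_sub_distrib, hnsum, hrs]
      ring
    have hsumC : ∑ i, Cc t i = 1 := by
      simp only [hC_def]
      rw [Finset.sum_add_distrib, ← Finset.mul_sum, Finset.sum_sub_distrib, hnsum, hcs]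
      ring
    have hsumD : ∑ i, D t i = 1 := by
      simp only [hD_def]
      rw [Finset.sum_add_distrib, ← Finset.mul_sum, Finset.sum_sub_distrib, hnsum, hds]
      ring
    set Pt : Matrix (Fin I) (Fin I) ℝ := fun i j => (g (i, j)).eval t with hPt_def
    have hPt : ∀ i j, Pt i j =
        A t * R t i * Cc t j + (if i = j then (1 - A t) * D t i else 0) := by
      intro i j; rw [hPt_def]; exact heval t (i, j)
    have hM1 : inM1 Pt := by
      refine ⟨?_, ?_, fun i => A t * R t i, Cc t,
        fun i => Pt i i / (A t * R t i * Cc t i), ?_, ?_, ?_, ?_, ?_⟩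
      · intro i j
        rw [hPt i j]
        have h1 : 0 ≤ A t * R t i * Cc t j := (mul_pos (mul_pos hA0 (hRpos i)) (hCpos j)).le
        split_ifs with h
        · nlinarith [mul_nonneg h1A (hDpos i).le]
        · linarith
      · have hinner : ∀ i, ∑ j, Pt i j = A t * R t i + (1 - A t) * D t i := by
          intro i
          calc ∑ j, Pt i j
              = ∑ j, (A t * R t i * Cc t j + (if i = j then (1 - A t) * D t i else 0)) :=
                Finset.sum_congr rfl (fun j _ => hPt i j)
            _ = A t * R t i * (∑ j, Cc t j) + (1 - A t) * D t i := by
                rw [Finset.sum_add_distrib, ← Finset.mul_sum, Finset.sum_ite_eq]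
                simp
            _ = A t * R t i + (1 - A t) * D t i := by rw [hsumC, mul_one]
        calc ∑ i, ∑ j, Pt i j = ∑ i, (A t * R t i + (1 - A t) * D t i) :=
              Finset.sum_congr rfl (fun i _ => hinner i)
          _ = A t * (∑ i, R t i) + (1 - A t) * (∑ i, D t i) := by
              rw [Finset.sum_add_distrib, ← Finset.mul_sum, ← Finset.mul_sum]
          _ = 1 := by rw [hsumR, hsumD]; ring
      · intro i; exact (mul_pos hA0 (hRpos i)).le
      · intro i; exact (hCpos i).le
      · intro i
        apply div_nonneg _ (mul_pos (mul_pos hA0 (hRpos i)) (hCpos i)).le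
        rw [hPt i i, if_pos rfl]
        have h1 : 0 ≤ A t * R t i * Cc t i := (mul_pos (mul_pos hA0 (hRpos i)) (hCpos i)).le
        nlinarith [mul_nonneg h1A (hDpos i).le]
      · intro i j hij
        rw [hPt i j, if_neg hij, add_zero]
      · intro i
        have hne : A t * R t i * Cc t i ≠ 0 :=
          (mul_pos (mul_pos hA0 (hRpos i)) (hCpos i)).ne'
        rw [mul_comm, div_mul_cancel₀ _ hne]
    exact h1 Pt hM1
  -- conclude at t = 0
  have h0 := vanish_all_of_infinite q g (Set.Ioo_infinite (by norm_num : (0:ℝ) < 1)) main 0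
  have hpt0 : (fun x : Fin I × Fin I => (g x).eval 0) = fun x => P x.1 x.2 := by
    funext x
    rw [heval 0 x]
    simp only [hA_def, hR_def, hC_def, hD_def]
    by_cases hx : x.1 = x.2
    · rw [if_pos hx, ← hx, hdiag x.1]
      ring
    · rw [if_neg hx, hoff x.1 x.2 hx]
      ring
  rw [hpt0] at h0
  exact h0

set_option maxHeartbeats 1000000 in
open Polynomial in
lemma dirB {I : ℕ} (hI : 2 ≤ I) (q : MvPolynomial (Fin I × Fin I) ℝ)
    (h2 : ∀ P : Matrix (Fin I) (Fin I) ℝ, inM2 P →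
        MvPolynomial.eval (fun x => P x.1 x.2) q = 0) :
    ∀ P : Matrix (Fin I) (Fin I) ℝ, inM1 P →
        MvPolynomial.eval (fun x => P x.1 x.2) q = 0 := by
  intro P hP
  obtain ⟨hpos, hsum1, zr, zc, zg, hzr, hzc, hzg, hoff, hdiag⟩ := hP
  have hIpos : (0:ℝ) < I := by
    have : (0:ℕ) < I := by omega
    exact_mod_cast this
  set n : ℝ := (I : ℝ)⁻¹ with hn_def
  have hn : 0 < n := by positivity
  have hIn : (I : ℝ) * n = 1 := mul_inv_cancel₀ hIpos.ne'
  have hnsum : ∑ _i : Fin I, n = 1 := by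
    rw [Finset.sum_const, Finset.card_univ, Fintype.card_fin, nsmul_eq_mul, hIn]
  set s : ℝ := ∑ i, zr i with hs_def
  set u : ℝ := ∑ i, zc i with hu_def
  -- positivity of the marginals
  have hPzero : ((∀ i, zr i = 0) ∨ (∀ i, zc i = 0)) → False := by
    intro h
    have hP0 : ∀ i j, P i j = 0 := by
      intro i j
      by_cases hij : i = j
      · subst hij
        rcases h with h | h
        · rw [hdiag i, h i, zero_mul, zero_mul]
        · rw [hdiag i, h i, mul_zero, zero_mul]
      · rcases h with h | h
        · rw [hoff i j hij, h i, zero_mul]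
        · rw [hoff i j hij, h j, mul_zero]
    have : ∑ i, ∑ j, P i j = 0 := by
      apply Finset.sum_eq_zero
      intro i _
      exact Finset.sum_eq_zero fun j _ => hP0 i j
    rw [hsum1] at this
    norm_num at this
  have hs : 0 < s := by
    rcases (Finset.sum_nonneg fun i (_ : i ∈ Finset.univ) => hzr i).lt_or_eq with h | h
    · exact h
    · exfalso
      apply hPzero
      left
      intro i
      exact (Finset.sum_eq_zero_iff_of_nonneg fun i _ => hzr i).mp h.symm i (Finset.mem_univ i)
  have hu : 0 < u := by
    rcases (Finset.sum_nonneg fun i (_ : i ∈ Finset.univ) => hzc i).lt_or_eq with h | h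
    · exact h
    · exfalso
      apply hPzero
      right
      intro i
      exact (Finset.sum_eq_zero_iff_of_nonneg fun i _ => hzc i).mp h.symm i (Finset.mem_univ i)
  set a : ℝ := s * u with ha_def
  have ha : 0 < a := mul_pos hs hu
  set r : Fin I → ℝ := fun i => zr i / s with hr_def
  set c : Fin I → ℝ := fun i => zc i / u with hc_def
  have hr_eq : ∀ i, r i = zr i / s := fun i => rfl
  have hc_eq : ∀ i, c i = zc i / u := fun i => rfl
  have hzr_eq : ∀ i, zr i = s * r i := by
    intro i; rw [hr_eq i]; field_simp
  have hzc_eq : ∀ i, zc i = u * c i := by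
    intro i; rw [hc_eq i]; field_simp
  have hr0 : ∀ i, 0 ≤ r i := fun i => div_nonneg (hzr i) hs.le
  have hc0 : ∀ i, 0 ≤ c i := fun i => div_nonneg (hzc i) hu.le
  have hrs : ∑ i, r i = 1 := by
    rw [show (∑ i, r i) = (∑ i, zr i) / s from by
      rw [Finset.sum_div]]
    rw [← hs_def, div_self hs.ne']
  have hcs : ∑ i, c i = 1 := by
    rw [show (∑ i, c i) = (∑ i, zc i) / u from by
      rw [Finset.sum_div]]
    rw [← hu_def, div_self hu.ne']
  set m : ℝ := ∑ i, r i * c i with hm_def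
  have hm0 : 0 ≤ m := Finset.sum_nonneg fun i _ => mul_nonneg (hr0 i) (hc0 i)
  have hm1 : (0:ℝ) < m + 1 := by linarith
  set v : Fin I → ℝ := fun i => (r i * c i + n) / (m + 1) with hv_def
  have hv_eq : ∀ i, v i = (r i * c i + n) / (m + 1) := fun i => rfl
  have hv0 : ∀ i, 0 ≤ v i := fun i =>
    div_nonneg (by nlinarith [mul_nonneg (hr0 i) (hc0 i), hn.le]) hm1.le
  have hvs : ∑ i, v i = 1 := by
    rw [show (∑ i, v i) = (∑ i, (r i * c i + n)) / (m + 1) from by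
      rw [Finset.sum_div]]
    rw [Finset.sum_add_distrib, hnsum, ← hm_def, div_self hm1.ne']
  clear_value n s u a r c m v
  -- key identity from the total-sum condition
  have hzrzc : ∑ i, zr i * zc i = a * m := by
    rw [hm_def, Finset.mul_sum]
    refine Finset.sum_congr rfl fun i _ => ?_
    rw [hzr_eq i, hzc_eq i, ha_def]
    ring
  have hkey : a * (1 - m) + ∑ i, P i i = 1 := by
    have hsplit : ∀ i j, P i j = zr i * zc j + (if i = j then P i i - zr i * zc i else 0) := by
      intro i j
      by_cases hij : i = j
      · subst hij; rw [if_pos rfl]; ring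
      · rw [if_neg hij, hoff i j hij, add_zero]
    have h1 : ∑ i, ∑ j, P i j = ∑ i, (zr i * u + (P i i - zr i * zc i)) := by
      refine Finset.sum_congr rfl fun i _ => ?_
      calc ∑ j, P i j
          = ∑ j, (zr i * zc j + (if i = j then P i i - zr i * zc i else 0)) :=
            Finset.sum_congr rfl fun j _ => hsplit i j
        _ = zr i * (∑ j, zc j) + (P i i - zr i * zc i) := by
            rw [Finset.sum_add_distrib, ← Finset.mul_sum, Finset.sum_ite_eq]
            simp
        _ = zr i * u + (P i i - zr i * zc i) := by rw [← hu_def]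
    rw [h1, Finset.sum_add_distrib, Finset.sum_sub_distrib, ← Finset.sum_mul, ← hs_def,
      hzrzc] at hsum1
    rw [ha_def] at hsum1 ⊢
    linear_combination hsum1
  -- the threshold
  set K : ℝ := a * (m + 1) + 1 with hK_def
  have hK1 : 1 ≤ K := by rw [hK_def]; nlinarith
  have hKpos : 0 < K := by linarith
  clear_value K
  set t0 : ℝ := 1 - 1 / (2 * K) with ht0_def
  have ht01 : t0 < 1 := by
    have : 0 < 1 / (2 * K) := by positivity
    rw [ht0_def]; linarith
  clear_value t0
  -- the polynomial path
  set g : Fin I × Fin I → Polynomial ℝ := fun x =>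
    C (P x.1 x.2) * (1 - X) + (if x.1 = x.2 then X * C (v x.1) else 0) with hg_def
  have heval : ∀ (t : ℝ) (x : Fin I × Fin I), (g x).eval t =
      P x.1 x.2 * (1 - t) + (if x.1 = x.2 then t * v x.1 else 0) := by
    intro t x
    rw [hg_def]
    by_cases hx : x.1 = x.2
    · simp only [if_pos hx, eval_add, eval_mul, eval_sub, eval_one, eval_C, eval_X]
      try ring
    · simp only [if_neg hx, eval_add, eval_mul, eval_sub, eval_one, eval_C, eval_X, eval_zero]
      try ring
  have main : ∀ t ∈ Set.Ioo t0 1,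
      MvPolynomial.eval (fun x => (g x).eval t) q = 0 := by
    rintro t ⟨htl, ht1⟩
    have h1t : (0:ℝ) < 1 - t := by linarith
    have hlt : (1 - t) * (2 * K) < 1 := by
      rw [ht0_def] at htl
      have h2' : 1 - t < 1 / (2 * K) := by linarith
      calc (1 - t) * (2 * K) < (1 / (2 * K)) * (2 * K) :=
            mul_lt_mul_of_pos_right h2' (by positivity)
        _ = 1 := by field_simp
    have haK : a ≤ K := by rw [hK_def]; nlinarith
    have hhalfK : (1 - t) * K < 1 / 2 := by nlinarith
    have hα1 : (1 - t) * a < 1 / 2 :=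
      lt_of_le_of_lt (mul_le_mul_of_nonneg_left haK h1t.le) hhalfK
    have hα0 : 0 ≤ (1 - t) * a := mul_nonneg h1t.le ha.le
    have ht_half : 1 / 2 ≤ t := by
      rw [ht0_def] at htl
      have h12 : 1 / (2 * K) ≤ 1 / 2 := by
        rw [div_le_div_iff₀ (by positivity) (by norm_num)]
        linarith
      linarith
    have hbig : (1 - t) * a * (m + 1) ≤ t := by
      have h3 : (1 - t) * a * (m + 1) ≤ (1 - t) * K := by
        rw [hK_def]; nlinarith [h1t.le]
      linarith
    set β : ℝ := (1 - t) * a with hβ_def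
    have hβ1 : (0:ℝ) < 1 - β := by rw [hβ_def]; linarith
    clear_value β
    set d : Fin I → ℝ := fun i =>
      ((1 - t) * P i i + t * v i - β * (r i * c i)) / (1 - β) with hd_def
    have hd_eq : ∀ i, d i = ((1 - t) * P i i + t * v i - β * (r i * c i)) / (1 - β) :=
      fun i => rfl
    clear_value d
    have hdnum : ∀ i, 0 ≤ (1 - t) * P i i + t * v i - β * (r i * c i) := by
      intro i
      have hrc : 0 ≤ r i * c i := mul_nonneg (hr0 i) (hc0 i)
      have hbrc : β * (r i * c i) ≤ t * v i := by
        have hstep : β * (r i * c i) * (m + 1) ≤ t * (r i * c i + n) := by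
          have e1 : β * (m + 1) * (r i * c i) ≤ t * (r i * c i) :=
            mul_le_mul_of_nonneg_right hbig hrc
          have e2 : 0 ≤ t * n := mul_nonneg (by linarith) hn.le
          nlinarith [e1, e2]
        calc β * (r i * c i) = (β * (r i * c i) * (m + 1)) / (m + 1) := by field_simp
          _ ≤ (t * (r i * c i + n)) / (m + 1) := by
              exact (div_le_div_iff_of_pos_right hm1).mpr hstep
          _ = t * v i := by rw [hv_eq i]; ring
      nlinarith [mul_nonneg h1t.le (hpos i i)]
    have hd0 : ∀ i, 0 ≤ d i := fun i => by
      rw [hd_eq i]; exact div_nonneg (hdnum i) hβ1.le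
    have hds : ∑ i, d i = 1 := by
      have hdsum : (∑ i, d i)
          = (∑ i, ((1 - t) * P i i + t * v i - β * (r i * c i))) / (1 - β) := by
        rw [Finset.sum_div]
        exact Finset.sum_congr rfl fun i _ => hd_eq i
      rw [hdsum]
      rw [Finset.sum_sub_distrib, Finset.sum_add_distrib, ← Finset.mul_sum, ← Finset.mul_sum,
        ← Finset.mul_sum, hvs, ← hm_def, div_eq_one_iff_eq hβ1.ne']
      rw [hβ_def]
      linear_combination (1 - t) * hkey
    set Pt : Matrix (Fin I) (Fin I) ℝ := fun i j => (g (i, j)).eval t with hPt_def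
    have hPt : ∀ i j, Pt i j =
        P i j * (1 - t) + (if i = j then t * v i else 0) := by
      intro i j; rw [hPt_def]; exact heval t (i, j)
    have hM2 : inM2 Pt := by
      refine ⟨β, r, c, d, hα0, by linarith, hr0, hc0, hd0, hrs, hcs, hds, ?_, ?_⟩
      · intro i j hij
        rw [hPt i j, if_neg hij, add_zero, hoff i j hij, hzr_eq i, hzc_eq j, hβ_def, ha_def]
        ring
      · intro i
        rw [hPt i i, if_pos rfl, hd_eq i, mul_comm (1 - β), div_mul_cancel₀ _ hβ1.ne']
        ring
    have hfun : (fun x : Fin I × Fin I => (g x).eval t) = fun x => Pt x.1 x.2 := by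
      funext x
      rw [hPt_def]
    rw [hfun]
    exact h2 Pt hM2
  have h0 := vanish_all_of_infinite q g (Set.Ioo_infinite ht01) main 0
  have hpt0 : (fun x : Fin I × Fin I => (g x).eval 0) = fun x => P x.1 x.2 := by
    funext x
    rw [heval 0 x]
    by_cases hx : x.1 = x.2
    · rw [if_pos hx]; ring
    · rw [if_neg hx]; ring
  rw [hpt0] at h0
  exact h0

/-- The models `M1` and `M2` have the same invariants: a polynomial in the entries
`p i j` vanishes on all of `M1` iff it vanishes on all of `M2`. -/
theorem M1_M2_same_invariants {I : ℕ} (hI : 2 ≤ I)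
    (q : MvPolynomial (Fin I × Fin I) ℝ) :
    (∀ P : Matrix (Fin I) (Fin I) ℝ, inM1 P →
        MvPolynomial.eval (fun x => P x.1 x.2) q = 0) ↔
    (∀ P : Matrix (Fin I) (Fin I) ℝ, inM2 P →
        MvPolynomial.eval (fun x => P x.1 x.2) q = 0) :=
  ⟨dirA hI q, dirB hI q⟩
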